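/- Let x ∈ ℂ with x not lying in the real segment [−2, 2] (viewed inside ℂ), and set λ = (x/2)(1 + √(1 − 4/x²)), where √ denotes the principal complex square root. Then λ ≠ 0, λ + λ⁻¹ = x, λ − λ⁻¹ = x·√(1 − 4/x²), and |λ| > 1. -/

import Mathlib

/-- The principal complex square root: the branch with nonnegative real part. -/
noncomputable def csqrt (w : ℂ) : ℂ := w ^ ((1 : ℂ) / 2)

lemma csqrt_sq {w : ℂ} (hw : w ≠ 0) : csqrt w * csqrt w = w := by
  unfold csqrt
  rw [← Complex.cpow_add _ _ hw]
  norm_num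

lemma csqrt_re_nonneg (w : ℂ) : 0 ≤ (csqrt w).re := by
  by_cases hw : w = 0
  · simp [csqrt, hw, Complex.zero_cpow (by norm_num : (1:ℂ)/2 ≠ 0)]
  · unfold csqrt
    rw [Complex.cpow_def_of_ne_zero hw, Complex.exp_re]
    apply mul_nonneg (Real.exp_nonneg _)
    apply Real.cos_nonneg_of_mem_Icc
    have h1 : (Complex.log w * ((1:ℂ)/2)).im = w.arg / 2 := by
      simp [Complex.mul_im, Complex.log_im]
      ring
    rw [h1]
    constructor
    · have := Complex.neg_pi_lt_arg w; linarith
    · have := Complex.arg_le_pi w; linarith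

/-- for `x ∈ ℂ` not in the real segment `[−2,2]`, setting
`λ = (x/2)(1 + √(1 − 4/x²))` one has `λ ≠ 0`, `λ + λ⁻¹ = x`,
`λ − λ⁻¹ = x·√(1 − 4/x²)` and `|λ| > 1`. -/
theorem lam_of_trace (x : ℂ) (hx : x ∉ (fun r : ℝ => (r : ℂ)) '' Set.Icc (-2 : ℝ) 2)
    (lam : ℂ) (hlam : lam = (x / 2) * (1 + csqrt (1 - 4 / x ^ 2))) :
    lam ≠ 0 ∧ lam + lam⁻¹ = x ∧ lam - lam⁻¹ = x * csqrt (1 - 4 / x ^ 2) ∧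
      1 < ‖lam‖ := by
  have hx0 : x ≠ 0 := by
    intro h; exact hx ⟨0, ⟨by norm_num, by norm_num⟩, by simp [h]⟩
  have hx2 : x ≠ 2 := by
    intro h; exact hx ⟨2, ⟨by norm_num, by norm_num⟩, by simp [h]⟩
  have hxm2 : x ≠ -2 := by
    intro h; exact hx ⟨-2, ⟨by norm_num, by norm_num⟩, by push_cast; simp [h]⟩
  set w : ℂ := 1 - 4 / x ^ 2 with hwdef
  have hw : w ≠ 0 := by
    intro h
    have hx2' : x ^ 2 = 4 := by
      rw [hwdef] at h
      field_simp at h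
      linear_combination h
    have : (x - 2) * (x + 2) = 0 := by linear_combination hx2'
    rcases mul_eq_zero.1 this with h' | h'
    · exact hx2 (by linear_combination h')
    · exact hxm2 (by linear_combination h')
  set s : ℂ := csqrt w with hsdef
  have hs2 : s * s = w := csqrt_sq hw
  set mu : ℂ := (x / 2) * (1 - s) with hmudef
  have hmul : lam * mu = 1 := by
    have : lam * mu = (x ^ 2 / 4) * (1 - s * s) := by rw [hlam, hmudef]; ring
    rw [hs2, hwdef] at this
    rw [this]
    field_simp
    ring
  have hlam0 : lam ≠ 0 := left_ne_zero_of_mul_eq_one hmul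
  have hinv : lam⁻¹ = mu := inv_eq_of_mul_eq_one_right hmul
  have hre : 0 ≤ s.re := csqrt_re_nonneg w
  refine ⟨hlam0, ?_, ?_, ?_⟩
  · rw [hinv, hlam, hmudef]; ring
  · rw [hinv, hlam, hmudef]; ring
  · -- |lam| > 1
    have hns : Complex.normSq mu ≤ Complex.normSq lam := by
      have h1 : Complex.normSq lam = Complex.normSq (x / 2) * Complex.normSq (1 + s) := by
        rw [hlam, map_mul]
      have h2 : Complex.normSq mu = Complex.normSq (x / 2) * Complex.normSq (1 - s) := by
        rw [hmudef, map_mul]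
      have h3 : Complex.normSq (1 + s) - Complex.normSq (1 - s) = 4 * s.re := by
        simp [Complex.normSq_apply, Complex.add_re, Complex.add_im, Complex.sub_re,
          Complex.sub_im]
        ring
      nlinarith [Complex.normSq_nonneg (x / 2)]
    have hBA : ‖mu‖ ≤ ‖lam‖ := by
      rw [Complex.norm_def, Complex.norm_def]
      exact Real.sqrt_le_sqrt hns
    have hAB : ‖lam‖ * ‖mu‖ = 1 := by
      rw [← norm_mul, hmul, norm_one]
    have h1le : 1 ≤ ‖lam‖ := by
      nlinarith [norm_nonneg lam]
    rcases lt_or_eq_of_le h1le with h | h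
    · exact h
    · exfalso
      have habs1 : ‖lam‖ = 1 := h.symm
      have hconj : lam⁻¹ = starRingEnd ℂ lam := by
        apply inv_eq_of_mul_eq_one_right
        rw [Complex.mul_conj, Complex.normSq_eq_norm_sq, habs1]
        norm_num
      have hxeq : x = ((2 * lam.re : ℝ) : ℂ) := by
        have hxsum : x = lam + lam⁻¹ := by rw [hinv, hlam, hmudef]; ring
        rw [hxsum, hconj, Complex.add_conj]
      apply hx
      refine ⟨2 * lam.re, ⟨?_, ?_⟩, hxeq.symm⟩
      all_goals {
        have h' : |lam.re| ≤ 1 := habs1 ▸ Complex.abs_re_le_norm lam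
        have h'' := abs_le.mp h'
        linarith [h''.1, h''.2] }
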